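/- arXiv:1402.5136 — 2 statements merged into one kernel-verified Lean document; each statement's English description precedes it below -/
import Mathlib

section
/- Let Θ be a substitution, i.e., a monoid endomorphism of the free monoid sending every variable to a nonempty word. If an identity u ≈ v satisfies property P_{1,1} (respectively P_{2,2}, P_{1,2}, P_{1,μ}, P_{μ,2}), then the identity Θ(u) ≈ Θ(v) satisfies the same property; that is, each of these five properties of identities is substitution-stable. -/
/-- Words over a countably infinite alphabet of variables (identified with ℕ). -/
abbrev Wd := List ℕ

/-- Evaluation of a word in a monoid under an assignment of the variables. -/
def evalWord {M : Type*} [Monoid M] (φ : ℕ → M) (u : Wd) : M := (u.map φ).prod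

/-- A monoid `M` satisfies the identity `e = (u, v)`. -/
def Sat (M : Type*) [Monoid M] (e : Wd × Wd) : Prop :=
  ∀ φ : ℕ → M, evalWord φ e.1 = evalWord φ e.2

/-- The identity `e` is a consequence of the set of identities `Γ`:
every monoid satisfying all identities of `Γ` satisfies `e`. -/
def Consequence (Γ : Set (Wd × Wd)) (e : Wd × Wd) : Prop :=
  ∀ (M : Type) [Monoid M], (∀ f ∈ Γ, Sat M f) → Sat M e

/-- The content of a word: the set of variables occurring in it. -/
def conW (u : Wd) : Set ℕ := {x | x ∈ u}

/-- The set of linear (exactly once occurring) variables of a word. -/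
def linW (u : Wd) : Set ℕ := {x | u.count x = 1}

/-- The set of non-linear (more than once occurring) variables of a word. -/
def nonW (u : Wd) : Set ℕ := {x | 2 ≤ u.count x}

/-- `restrict u X` is the word obtained from `u` by deleting all occurrences of
all variables not in `X`. -/
noncomputable def restrict (u : Wd) (X : Set ℕ) : Wd :=
  u.filter (fun a => @decide (a ∈ X) (Classical.propDecidable _))

/-- The closure of a set of identities under deleting variables. -/
def delta (Γ : Set (Wd × Wd)) : Set (Wd × Wd) :=
  {e | ∃ f ∈ Γ, ∃ X : Set ℕ, e = (restrict f.1 X, restrict f.2 X)}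

/-- A word is almost-linear if it has at most one non-linear variable. -/
def AlmostLinearW (u : Wd) : Prop := ∀ x y, 2 ≤ u.count x → 2 ≤ u.count y → x = y

/-- An identity is almost-linear if both of its sides are almost-linear words. -/
def AlmostLinearId (e : Wd × Wd) : Prop := AlmostLinearW e.1 ∧ AlmostLinearW e.2

/-- An identity is regular if both sides have the same content. -/
def RegularId (e : Wd × Wd) : Prop := conW e.1 = conW e.2

/-- A word `u` is an isoterm for a monoid `M` if the only word `v` with
`M ⊨ u ≈ v` is `u` itself. -/
def Isoterm (M : Type*) [Monoid M] (u : Wd) : Prop := ∀ v : Wd, Sat M (u, v) → v = u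

/-- An identity `u ≈ v` is block-balanced if `u(x, lin u) = v(x, lin u)`
for every variable `x`. -/
def BlockBalanced (e : Wd × Wd) : Prop :=
  ∀ x : ℕ, restrict e.1 ({x} ∪ linW e.1) = restrict e.2 ({x} ∪ linW e.1)

/-- A monoid is finitely based: some finite set of its identities implies all of them. -/
def FinitelyBased (S : Type*) [Monoid S] : Prop :=
  ∃ Γ : Set (Wd × Wd), Γ.Finite ∧ (∀ e ∈ Γ, Sat S e) ∧
    ∀ e : Wd × Wd, Sat S e → Consequence Γ e

/-- Index of the first occurrence of a variable in a word. -/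
def firstIdx (u : Wd) (x : ℕ) : ℕ := u.idxOf x

/-- Index of the last occurrence of a variable in a word. -/
def lastIdx (u : Wd) (x : ℕ) : ℕ := u.length - 1 - u.reverse.idxOf x

/-- σ1 : x y t1 x t2 y ≈ y x t1 x t2 y, with x=0, y=1, t1=2, t2=3. -/
def sigma1 : Wd × Wd := ([0,1,2,0,3,1], [1,0,2,0,3,1])

/-- σμ : x t1 x y t2 y ≈ x t1 y x t2 y, with x=0, y=1, t1=2, t2=3. -/
def sigmaMu : Wd × Wd := ([0,2,0,1,3,1], [0,2,1,0,3,1])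

/-- σ2 : x t1 y t2 x y ≈ x t1 y t2 y x, with x=0, y=1, t1=2, t2=3. -/
def sigma2 : Wd × Wd := ([0,2,1,3,0,1], [0,2,1,3,1,0])

/-- Property P₁,₂: same linear and non-linear variables, and for all variables
`x, y` of the content, the first occurrence of `x` precedes the last occurrence
of `y` on one side iff it does on the other side. -/
def P12 (e : Wd × Wd) : Prop :=
  linW e.1 = linW e.2 ∧ nonW e.1 = nonW e.2 ∧
  ∀ x ∈ conW e.1, ∀ y ∈ conW e.1,
    (firstIdx e.1 x < lastIdx e.1 y ↔ firstIdx e.2 x < lastIdx e.2 y)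

/-- Applying a substitution (a map from variables to words) to a word. -/
def substW (Θ : ℕ → Wd) (u : Wd) : Wd := (u.map Θ).flatten

/-- A balanced identity: each variable occurs equally often on both sides. -/
def BalancedId (e : Wd × Wd) : Prop := ∀ x : ℕ, e.1.count x = e.2.count x

/-- The list of positions of the occurrences of `x` in `u`. -/
def occPos (u : Wd) (x : ℕ) : List ℕ :=
  (List.range u.length).filter (fun j => u.getD j 0 == x)

/-- Index of the `i`-th (1-based) occurrence of `x` in `u`. -/
def nthOcc (u : Wd) (x : ℕ) (i : ℕ) : ℕ := (occPos u x).getD (i - 1) 0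

/-- Property P₁,₁: the order of first occurrences of distinct variables agrees. -/
def P11 (e : Wd × Wd) : Prop :=
  linW e.1 = linW e.2 ∧ nonW e.1 = nonW e.2 ∧
  ∀ x ∈ conW e.1, ∀ y ∈ conW e.1, x ≠ y →
    (firstIdx e.1 x < firstIdx e.1 y ↔ firstIdx e.2 x < firstIdx e.2 y)

/-- Property P₂,₂: the order of last occurrences of distinct variables agrees. -/
def P22 (e : Wd × Wd) : Prop :=
  linW e.1 = linW e.2 ∧ nonW e.1 = nonW e.2 ∧
  ∀ x ∈ conW e.1, ∀ y ∈ conW e.1, x ≠ y →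
    (lastIdx e.1 x < lastIdx e.1 y ↔ lastIdx e.2 x < lastIdx e.2 y)

/-- Property P₁,μ for balanced identities. -/
def P1mu (e : Wd × Wd) : Prop :=
  BalancedId e ∧
  ∀ x ∈ conW e.1, ∀ y ∈ conW e.1, x ≠ y →
    ∀ i : ℕ, 1 ≤ i → i ≤ e.1.count y →
      (firstIdx e.1 x < nthOcc e.1 y i ↔ firstIdx e.2 x < nthOcc e.2 y i)

/-- Property Pμ,₂ for balanced identities. -/
def Pmu2 (e : Wd × Wd) : Prop :=
  BalancedId e ∧
  ∀ x ∈ conW e.1, ∀ y ∈ conW e.1, x ≠ y →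
    ∀ i : ℕ, 1 ≤ i → i ≤ e.1.count x →
      (nthOcc e.1 x i < lastIdx e.1 y ↔ nthOcc e.2 x i < lastIdx e.2 y)


set_option linter.unreachableTactic false
set_option linter.unusedTactic false
set_option linter.unnecessarySeqFocus false

namespace StabAux
open List


theorem count_take_indexOf (w : Wd) (a : ℕ) : count a (w.take (w.idxOf a)) = 0 := by
  induction w with
  | nil => simp
  | cons c w ih =>
    by_cases h : a = c
    · subst h; simp [List.idxOf_cons_self]
    · rw [List.idxOf_cons_ne _ (by exact fun hc => h hc.symm)]
      simp [List.count_cons, ih, h, Ne.symm h]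

theorem mem_take_iff {w : Wd} {a : ℕ} {k : ℕ} : a ∈ w.take k ↔ a ∈ w ∧ w.idxOf a < k := by
  constructor
  · intro h
    have hm : a ∈ w := (take_sublist k w).mem h
    refine ⟨hm, ?_⟩
    by_contra hk
    push_neg at hk
    have : w.take k = (w.take (w.idxOf a)).take k := by
      rw [take_take, Nat.min_eq_left hk]
    rw [this] at h
    have := ((take_sublist k _).mem h)
    have := count_pos_iff.2 this
    rw [count_take_indexOf] at this
    omega
  · rintro ⟨hm, hk⟩
    have hlt : w.idxOf a < w.length := idxOf_lt_length_iff.2 hm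
    have hlen : w.idxOf a < (w.take k).length := by
      rw [length_take]; omega
    have : (w.take k)[w.idxOf a] = a := by
      rw [getElem_take]; exact getElem_idxOf hlt
    rw [← this]; exact getElem_mem hlen

theorem count_take_add_count_drop (w : Wd) (a k : ℕ) :
    count a (w.take k) + count a (w.drop k) = count a w := by
  conv_rhs => rw [← take_append_drop k w]
  rw [count_append]

theorem lastIdx_lt_length {w : Wd} {a : ℕ} (h : a ∈ w) : lastIdx w a < w.length := by
  have : 0 < w.length := length_pos_iff.2 (by rintro rfl; simp at h)
  unfold lastIdx; omega

theorem getD_lastIdx {w : Wd} {a : ℕ} (h : a ∈ w) : w.getD (lastIdx w a) 0 = a := by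
  have hr : a ∈ w.reverse := mem_reverse.2 h
  have hri : w.reverse.idxOf a < w.length := by
    have := idxOf_lt_length_iff.2 hr; simpa using this
  have h1 : 0 < w.length := length_pos_iff.2 (by rintro rfl; simp at h)
  have hlt : lastIdx w a < w.length := lastIdx_lt_length h
  rw [getD_eq_getElem _ _ hlt]
  have hrl : w.reverse.idxOf a < w.reverse.length := by simpa using hri
  have := getElem_idxOf hrl
  rw [getElem_reverse] at this
  simpa only [lastIdx] using this

theorem count_drop_lastIdx {w : Wd} {a : ℕ} (h : a ∈ w) :
    count a (w.drop (lastIdx w a + 1)) = 0 := by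
  have hr : a ∈ w.reverse := mem_reverse.2 h
  have hri : w.reverse.idxOf a < w.length := by
    have := idxOf_lt_length_iff.2 hr; simpa using this
  have h1 : 0 < w.length := length_pos_iff.2 (by rintro rfl; simp at h)
  have hkey : lastIdx w a + 1 = w.length - w.reverse.idxOf a := by unfold lastIdx; omega
  rw [hkey]
  have : w.reverse.take (w.reverse.idxOf a) = (w.drop (w.length - w.reverse.idxOf a)).reverse := by
    rw [take_reverse]
  have hc := count_take_indexOf w.reverse a
  rw [this, count_reverse] at hc
  exact hc

theorem le_lastIdx {w : Wd} {a : ℕ} {k : ℕ} (hk : k < w.length) (ha : w.getD k 0 = a) :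
    k ≤ lastIdx w a := by
  have hm : a ∈ w := by
    rw [← ha, getD_eq_getElem _ _ hk]; exact getElem_mem hk
  by_contra hlt
  push_neg at hlt
  have hge : lastIdx w a + 1 ≤ k := hlt
  have hka : w[k]'hk = a := by rw [← getD_eq_getElem _ _ hk]; exact ha
  have : a ∈ w.drop (lastIdx w a + 1) := by
    refine mem_iff_getElem.2 ⟨k - (lastIdx w a + 1), by rw [length_drop]; omega, ?_⟩
    rw [getElem_drop]
    exact (by congr 1; omega : w[lastIdx w a + 1 + (k - (lastIdx w a + 1))]'(by omega) = w[k]'hk).trans hka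
  have := count_pos_iff.2 this
  rw [count_drop_lastIdx hm] at this
  omega

theorem mem_drop_iff {w : Wd} {a : ℕ} {k : ℕ} : a ∈ w.drop k ↔ a ∈ w ∧ k ≤ lastIdx w a := by
  constructor
  · intro h
    have hm : a ∈ w := (drop_sublist k w).mem h
    refine ⟨hm, ?_⟩
    obtain ⟨j, hj, hja⟩ := mem_iff_getElem.1 h
    have hkj : k + j < w.length := by have := hj; rw [length_drop] at this; omega
    have : w.getD (k + j) 0 = a := by
      rw [getD_eq_getElem _ _ hkj]; rw [getElem_drop] at hja; exact hja
    have := le_lastIdx hkj this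
    omega
  · rintro ⟨hm, hk⟩
    have hlt : lastIdx w a < w.length := lastIdx_lt_length hm
    have hlen : lastIdx w a - k < (w.drop k).length := by rw [length_drop]; omega
    have hla : w[lastIdx w a]'hlt = a := by
      have := getD_lastIdx hm; rwa [getD_eq_getElem _ _ hlt] at this
    refine mem_iff_getElem.2 ⟨lastIdx w a - k, hlen, ?_⟩
    rw [getElem_drop]
    exact (by congr 1; omega : w[k + (lastIdx w a - k)]'(by omega) = w[lastIdx w a]'hlt).trans hla

theorem occPos_cons (x b : ℕ) (w : Wd) :
    occPos (x :: w) b = (if x = b then [0] else []) ++ (occPos w b).map (· + 1) := by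
  unfold occPos
  rw [length_cons, range_succ_eq_map, filter_cons]
  have h1 : ((x :: w).getD 0 0 == b) = (x == b) := rfl
  rw [h1]
  have h2 : filter (fun j => (x :: w).getD j 0 == b) (map Nat.succ (range w.length))
      = map Nat.succ (filter (fun j => w.getD j 0 == b) (range w.length)) := by
    rw [filter_map]
    congr 1
  rw [h2]
  by_cases hxb : x = b
  · simp [hxb]
  · simp only [beq_iff_eq, hxb, if_false]
    simp

theorem length_occPos (w : Wd) (b : ℕ) : (occPos w b).length = count b w := by
  induction w with
  | nil => simp [occPos]
  | cons x w ih =>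
    rw [occPos_cons, length_append, length_map, ih, count_cons]
    by_cases hxb : x = b <;> simp [hxb] <;> omega

theorem mem_occPos {w : Wd} {b j : ℕ} : j ∈ occPos w b ↔ j < w.length ∧ w.getD j 0 = b := by
  unfold occPos
  rw [mem_filter, mem_range, beq_iff_eq]

theorem nthOcc_cons {x b : ℕ} {w : Wd} {i : ℕ} (h1 : 1 ≤ i) (h2 : i ≤ count b (x :: w)) :
    nthOcc (x :: w) b i =
      if x = b then (if i = 1 then 0 else nthOcc w b (i - 1) + 1)
      else nthOcc w b i + 1 := by
  unfold nthOcc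
  rw [occPos_cons]
  by_cases hxb : x = b
  · subst hxb
    rw [if_pos rfl, if_pos rfl]
    have hcount : count x (x :: w) = count x w + 1 := by simp [count_cons]
    by_cases hi1 : i = 1
    · subst hi1; simp
    · rw [if_neg hi1]
      have hlen : i - 2 < (occPos w x).length := by rw [length_occPos]; omega
      have e1 : i - 1 = (i - 2) + 1 := by omega
      calc (([0] ++ (occPos w x).map (· + 1)).getD (i - 1) 0)
          = ((occPos w x).map (· + 1)).getD (i - 2) 0 := by rw [e1]; rfl
        _ = (occPos w x).getD (i - 2) 0 + 1 := by
            rw [getD_eq_getElem ((occPos w x).map (· + 1)) 0 (by rw [length_map]; exact hlen),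
              getElem_map, getD_eq_getElem (occPos w x) 0 hlen]
        _ = (occPos w x).getD (i - 1 - 1) 0 + 1 := by rw [show i - 1 - 1 = i - 2 from by omega]
  · rw [if_neg hxb, if_neg hxb]
    have hcount : count b (x :: w) = count b w :=
      count_cons_of_ne hxb
    have hlen : i - 1 < (occPos w b).length := by rw [length_occPos]; omega
    calc (([] ++ (occPos w b).map (· + 1)).getD (i - 1) 0)
        = ((occPos w b).map (· + 1)).getD (i - 1) 0 := by rw [nil_append]
      _ = (occPos w b).getD (i - 1) 0 + 1 := by
          rw [getD_eq_getElem ((occPos w b).map (· + 1)) 0 (by rw [length_map]; exact hlen),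
            getElem_map, getD_eq_getElem (occPos w b) 0 hlen]

theorem nthOcc_lt_iff {w : Wd} {b i : ℕ} (h1 : 1 ≤ i) (h2 : i ≤ count b w) (k : ℕ) :
    nthOcc w b i < k ↔ i ≤ count b (w.take k) := by
  induction w generalizing i k with
  | nil => simp at h2; omega
  | cons x w ih =>
    cases k with
    | zero => simp; omega
    | succ k =>
      rw [take_succ_cons, nthOcc_cons h1 h2]
      by_cases hxb : x = b
      · subst hxb
        rw [if_pos rfl]
        have hcx : count x (x :: w) = count x w + 1 := by simp [count_cons]
        have hct : count x (x :: w.take k) = count x (w.take k) + 1 := by simp [count_cons]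
        by_cases hi1 : i = 1
        · subst hi1
          rw [if_pos rfl, hct]
          constructor <;> intro <;> omega
        · rw [if_neg hi1, hct]
          have := ih (i := i - 1) (k := k) (by omega) (by omega)
          omega
      · rw [if_neg hxb]
        have hcx : count b (x :: w) = count b w := by simp [count_cons, Ne.symm hxb, hxb]
        have hct : count b (x :: w.take k) = count b (w.take k) := by
          simp [count_cons, Ne.symm hxb, hxb]
        rw [hct]
        have := ih (i := i) (k := k) h1 (by omega)
        omega

theorem nthOcc_spec {w : Wd} {b i : ℕ} (h1 : 1 ≤ i) (h2 : i ≤ count b w) :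
    nthOcc w b i < w.length ∧ w.getD (nthOcc w b i) 0 = b := by
  have hlen : i - 1 < (occPos w b).length := by rw [length_occPos]; omega
  have : nthOcc w b i ∈ occPos w b := by
    unfold nthOcc
    rw [getD_eq_getElem _ _ hlen]
    exact getElem_mem hlen
  exact mem_occPos.1 this

theorem nthOcc_one {w : Wd} {b : ℕ} (h : b ∈ w) : nthOcc w b 1 = w.idxOf b := by
  induction w with
  | nil => simp at h
  | cons x w ih =>
    have hc : 1 ≤ count b (x :: w) := count_pos_iff.2 h
    rw [nthOcc_cons le_rfl hc]
    by_cases hxb : x = b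
    · subst hxb; simp [List.idxOf_cons_self]
    · rw [if_neg hxb]
      have hb : b ∈ w := by cases h with
        | head => exact absurd rfl hxb
        | tail _ h => exact h
      rw [ih hb, List.idxOf_cons_ne _ (hxb : x ≠ b)]

theorem nthOcc_count {w : Wd} {b : ℕ} (h : b ∈ w) :
    nthOcc w b (count b w) = lastIdx w b := by
  have hc : 1 ≤ count b w := count_pos_iff.2 h
  set q := lastIdx w b with hq
  have hqlt : q < w.length := lastIdx_lt_length h
  have hgd : w.getD q 0 = b := getD_lastIdx h
  have hdrop : count b (w.drop (q + 1)) = 0 := count_drop_lastIdx h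
  have h1 : nthOcc w b (count b w) < q + 1 := by
    rw [nthOcc_lt_iff hc le_rfl]
    have := count_take_add_count_drop w b (q + 1)
    omega
  have h2 : ¬ nthOcc w b (count b w) < q := by
    rw [nthOcc_lt_iff hc le_rfl]
    have hsplit := count_take_add_count_drop w b q
    have hdq : w.drop q = w.getD q 0 :: w.drop (q + 1) := by
      rw [drop_eq_getElem_cons hqlt, getD_eq_getElem _ _ hqlt]
    rw [hdq, hgd] at hsplit
    simp [count_cons] at hsplit
    omega
  omega


def PrecFF (w : Wd) (a b : ℕ) : Prop := ∃ s t, w = s ++ a :: t ∧ b ∉ s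
def PrecLL (w : Wd) (a b : ℕ) : Prop := ∃ s t, w = s ++ b :: t ∧ a ∉ t
def PrecFL (w : Wd) (a b : ℕ) : Prop := ∃ s t, w = s ++ b :: t ∧ a ∈ s

theorem getD_indexOf {w : Wd} {a : ℕ} (h : a ∈ w) : w.getD (w.idxOf a) 0 = a := by
  have hlt := idxOf_lt_length_iff.2 h
  rw [getD_eq_getElem _ _ hlt]; exact getElem_idxOf hlt

theorem split_take_drop {w : Wd} {k : ℕ} (h : k < w.length) :
    w = w.take k ++ w.getD k 0 :: w.drop (k + 1) := by
  rw [getD_eq_getElem _ _ h, ← drop_eq_getElem_cons h, take_append_drop]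

theorem drop_split {s t : Wd} {c : ℕ} : (s ++ c :: t).drop (s.length + 1) = t := by
  rw [drop_append, drop_of_length_le (by omega)]
  simp

theorem getD_split {s t : Wd} {c : ℕ} : (s ++ c :: t).getD s.length 0 = c := by
  have hlt : s.length < (s ++ c :: t).length := by rw [length_append]; simp
  rw [getD_eq_getElem _ _ hlt, getElem_append_right le_rfl]
  simp

theorem precFF_iff {w : Wd} {a b : ℕ} (ha : a ∈ w) (hb : b ∈ w) (hab : a ≠ b) :
    PrecFF w a b ↔ firstIdx w a < firstIdx w b := by
  constructor
  · rintro ⟨s, t, rfl, hbs⟩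
    have h1 : firstIdx (s ++ a :: t) a ≤ s.length := by
      unfold firstIdx
      by_cases has : a ∈ s
      · rw [idxOf_append_of_mem has]
        exact le_of_lt (idxOf_lt_length_iff.2 has)
      · rw [idxOf_append_of_notMem has, List.idxOf_cons_self]
        omega
    have h2 : s.length < firstIdx (s ++ a :: t) b := by
      unfold firstIdx
      rw [idxOf_append_of_notMem hbs, List.idxOf_cons_ne _ hab]
      omega
    omega
  · intro h
    have hlt := idxOf_lt_length_iff.2 ha
    refine ⟨w.take (w.idxOf a), w.drop (w.idxOf a + 1), ?_, ?_⟩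
    · conv_lhs => rw [split_take_drop hlt]
      rw [getD_indexOf ha]
    · intro hmem
      have := mem_take_iff.1 hmem
      unfold firstIdx at h; omega

theorem precLL_iff {w : Wd} {a b : ℕ} (ha : a ∈ w) (hb : b ∈ w) (hab : a ≠ b) :
    PrecLL w a b ↔ lastIdx w a < lastIdx w b := by
  constructor
  · rintro ⟨s, t, hw, hat⟩
    have hlt : s.length < w.length := by rw [hw, length_append]; simp
    have hgd : w.getD s.length 0 = b := by rw [hw]; exact getD_split
    have h1 : s.length ≤ lastIdx w b := le_lastIdx hlt hgd
    have h2 : lastIdx w a ≤ s.length := by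
      by_contra hcon
      push_neg at hcon
      have : a ∈ w.drop (s.length + 1) := mem_drop_iff.2 ⟨ha, by omega⟩
      rw [hw, drop_split] at this
      exact hat this
    have hne : lastIdx w a ≠ lastIdx w b := by
      intro he
      have := getD_lastIdx ha
      rw [he, getD_lastIdx hb] at this
      exact hab this.symm
    omega
  · intro h
    have hlt := lastIdx_lt_length hb
    refine ⟨w.take (lastIdx w b), w.drop (lastIdx w b + 1), ?_, ?_⟩
    · conv_lhs => rw [split_take_drop hlt]
      rw [getD_lastIdx hb]
    · intro hmem
      have := (mem_drop_iff.1 hmem).2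
      omega

theorem precFL_iff {w : Wd} {a b : ℕ} (ha : a ∈ w) (hb : b ∈ w) :
    PrecFL w a b ↔ firstIdx w a < lastIdx w b := by
  constructor
  · rintro ⟨s, t, hw, has⟩
    have hlt : s.length < w.length := by rw [hw, length_append]; simp
    have hgd : w.getD s.length 0 = b := by rw [hw]; exact getD_split
    have h1 : s.length ≤ lastIdx w b := le_lastIdx hlt hgd
    have h2 : firstIdx w a < s.length := by
      unfold firstIdx
      rw [hw, idxOf_append_of_mem has]
      exact idxOf_lt_length_iff.2 has
    omega
  · intro h
    have hlt := lastIdx_lt_length hb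
    refine ⟨w.take (lastIdx w b), w.drop (lastIdx w b + 1), ?_, ?_⟩
    · conv_lhs => rw [split_take_drop hlt]
      rw [getD_lastIdx hb]
    · exact mem_take_iff.2 ⟨ha, h⟩

theorem firstIdx_lt_nthOcc_iff {w : Wd} {a b i : ℕ} (ha : a ∈ w) (hab : a ≠ b)
    (h1 : 1 ≤ i) (h2 : i ≤ count b w) :
    firstIdx w a < nthOcc w b i ↔ count b (w.take (w.idxOf a)) < i := by
  have hfa := idxOf_lt_length_iff.2 ha
  obtain ⟨hq, hqd⟩ := nthOcc_spec h1 h2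
  have hne : nthOcc w b i ≠ w.idxOf a := by
    intro he; rw [he, getD_indexOf ha] at hqd; exact hab hqd
  have hiff := nthOcc_lt_iff h1 h2 (w.idxOf a + 1)
  have hdropc : w.drop (w.idxOf a) = a :: w.drop (w.idxOf a + 1) := by
    rw [drop_eq_getElem_cons hfa]
    congr 1
    rw [← getD_eq_getElem _ _ hfa]; exact getD_indexOf ha
  have e1 := count_take_add_count_drop w b (w.idxOf a)
  have e2 := count_take_add_count_drop w b (w.idxOf a + 1)
  have e3 : count b (w.drop (w.idxOf a)) = count b (w.drop (w.idxOf a + 1)) := by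
    rw [hdropc, count_cons_of_ne hab]
  have e4 : count b (w.take (w.idxOf a + 1)) = count b (w.take (w.idxOf a)) := by omega
  rw [e4] at hiff
  unfold firstIdx
  constructor
  · intro h
    by_contra hcon
    push_neg at hcon
    have := hiff.2 hcon
    omega
  · intro h
    have : ¬ nthOcc w b i < w.idxOf a + 1 := fun hc => by have := hiff.1 hc; omega
    omega

theorem nthOcc_lt_lastIdx_iff {w : Wd} {a b i : ℕ} (hb : b ∈ w) (hab : a ≠ b)
    (h1 : 1 ≤ i) (h2 : i ≤ count a w) :
    nthOcc w a i < lastIdx w b ↔ i + count a (w.drop (lastIdx w b + 1)) ≤ count a w := by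
  have hq := lastIdx_lt_length hb
  obtain ⟨hp, hpd⟩ := nthOcc_spec h1 h2
  have hne : nthOcc w a i ≠ lastIdx w b := by
    intro he; rw [he, getD_lastIdx hb] at hpd; exact hab hpd.symm
  have hiff := nthOcc_lt_iff h1 h2 (lastIdx w b + 1)
  have e1 := count_take_add_count_drop w a (lastIdx w b + 1)
  constructor
  · intro h
    have := hiff.1 (by omega)
    omega
  · intro h
    have : nthOcc w a i < lastIdx w b + 1 := hiff.2 (by omega)
    omega


theorem substW_nil (Θ : ℕ → Wd) : substW Θ [] = [] := rfl

theorem substW_cons (Θ : ℕ → Wd) (x : ℕ) (u : Wd) :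
    substW Θ (x :: u) = Θ x ++ substW Θ u := by simp [substW]

theorem substW_append (Θ : ℕ → Wd) (s t : Wd) :
    substW Θ (s ++ t) = substW Θ s ++ substW Θ t := by simp [substW]

theorem count_substW (Θ : ℕ → Wd) (u : Wd) (a : ℕ) :
    count a (substW Θ u) = (u.map (fun x => count a (Θ x))).sum := by
  simp [substW, count_flatten, map_map, Function.comp_def]

theorem mem_substW {Θ : ℕ → Wd} {u : Wd} {a : ℕ} :
    a ∈ substW Θ u ↔ ∃ x, x ∈ u ∧ a ∈ Θ x := by
  simp [substW, mem_flatten]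

theorem substW_perm (Θ : ℕ → Wd) {u v : Wd} (h : ∀ z, count z u = count z v) :
    substW Θ u ~ substW Θ v :=
  Perm.flatten (Perm.map Θ (perm_iff_count.2 h))

theorem substW_split {Θ : ℕ → Wd} {u S T : Wd} {c : ℕ}
    (h : substW Θ u = S ++ c :: T) :
    ∃ s x t s₀ t₀, u = s ++ x :: t ∧ Θ x = s₀ ++ c :: t₀ ∧
      S = substW Θ s ++ s₀ ∧ T = t₀ ++ substW Θ t := by
  induction u generalizing S with
  | nil =>
    exfalso
    rw [substW_nil] at h
    exact (List.append_ne_nil_of_right_ne_nil S (cons_ne_nil c T)) h.symm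
  | cons x u ih =>
    rw [substW_cons] at h
    rcases append_eq_append_iff.1 h with ⟨m, hS, hm⟩ | ⟨m, hx, hm⟩
    · obtain ⟨s, x', t, s₀, t₀, hu, hx', hm', hT⟩ := ih hm
      exact ⟨x :: s, x', t, s₀, t₀, by rw [hu, cons_append], hx',
        by rw [hS, hm', substW_cons, append_assoc], hT⟩
    · cases m with
      | nil =>
        obtain ⟨s, x', t, s₀, t₀, hu, hx', hm', hT⟩ := ih (show substW Θ u = [] ++ c :: T by simpa using hm.symm)
        have h1 : substW Θ s = [] ∧ s₀ = [] := append_eq_nil_iff.1 hm'.symm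
        refine ⟨x :: s, x', t, s₀, t₀, by rw [hu, cons_append], hx', ?_, hT⟩
        rw [substW_cons, h1.1, h1.2] at *
        simp at hx ⊢
        rw [hx]
      | cons c' m' =>
        have hc : c' = c ∧ T = m' ++ substW Θ u := by
          have := hm; simp at this; exact ⟨this.1.symm, this.2⟩
        refine ⟨[], x, u, S, m', rfl, ?_, by simp [substW_nil], hc.2⟩
        rw [hx, hc.1]

theorem flatFF {Θ : ℕ → Wd} {u : Wd} {a b : ℕ} :
    PrecFF (substW Θ u) a b ↔
      ∃ s x t, u = s ++ x :: t ∧ PrecFF (Θ x) a b ∧ b ∉ substW Θ s := by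
  constructor
  · rintro ⟨S, T, h, hbS⟩
    obtain ⟨s, x, t, s₀, t₀, hu, hx, hS, hT⟩ := substW_split h
    refine ⟨s, x, t, hu, ⟨s₀, t₀, hx, fun hc => hbS ?_⟩, fun hc => hbS ?_⟩
    · rw [hS]; exact mem_append_right _ hc
    · rw [hS]; exact mem_append_left _ hc
  · rintro ⟨s, x, t, hu, ⟨s₀, t₀, hx, hb₀⟩, hbs⟩
    refine ⟨substW Θ s ++ s₀, t₀ ++ substW Θ t, ?_, ?_⟩
    · rw [hu, substW_append, substW_cons, hx]; simp
    · intro hc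
      rcases mem_append.1 hc with h | h
      exacts [hbs h, hb₀ h]

theorem flatLL {Θ : ℕ → Wd} {u : Wd} {a b : ℕ} :
    PrecLL (substW Θ u) a b ↔
      ∃ s x t, u = s ++ x :: t ∧ PrecLL (Θ x) a b ∧ a ∉ substW Θ t := by
  constructor
  · rintro ⟨S, T, h, haT⟩
    obtain ⟨s, x, t, s₀, t₀, hu, hx, hS, hT⟩ := substW_split h
    refine ⟨s, x, t, hu, ⟨s₀, t₀, hx, fun hc => haT ?_⟩, fun hc => haT ?_⟩
    · rw [hT]; exact mem_append_left _ hc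
    · rw [hT]; exact mem_append_right _ hc
  · rintro ⟨s, x, t, hu, ⟨s₀, t₀, hx, ha₀⟩, hat⟩
    refine ⟨substW Θ s ++ s₀, t₀ ++ substW Θ t, ?_, ?_⟩
    · rw [hu, substW_append, substW_cons, hx]; simp
    · intro hc
      rcases mem_append.1 hc with h | h
      exacts [ha₀ h, hat h]

theorem flatFL {Θ : ℕ → Wd} {u : Wd} {a b : ℕ} :
    PrecFL (substW Θ u) a b ↔
      ∃ s x t, u = s ++ x :: t ∧
        (PrecFL (Θ x) a b ∨ (b ∈ Θ x ∧ a ∈ substW Θ s)) := by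
  constructor
  · rintro ⟨S, T, h, haS⟩
    obtain ⟨s, x, t, s₀, t₀, hu, hx, hS, hT⟩ := substW_split h
    rw [hS] at haS
    rcases mem_append.1 haS with h' | h'
    · exact ⟨s, x, t, hu, Or.inr ⟨by rw [hx]; simp, h'⟩⟩
    · exact ⟨s, x, t, hu, Or.inl ⟨s₀, t₀, hx, h'⟩⟩
  · rintro ⟨s, x, t, hu, hcase⟩
    rcases hcase with ⟨s₀, t₀, hx, ha₀⟩ | ⟨hbx, has⟩
    · refine ⟨substW Θ s ++ s₀, t₀ ++ substW Θ t, ?_, mem_append_right _ ha₀⟩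
      rw [hu, substW_append, substW_cons, hx]; simp
    · obtain ⟨s₀, t₀, hx⟩ := append_of_mem hbx
      refine ⟨substW Θ s ++ s₀, t₀ ++ substW Θ t, ?_, mem_append_left _ has⟩
      rw [hu, substW_append, substW_cons, hx]; simp

theorem exists_first_split {Θ : ℕ → Wd} {u : Wd} {a : ℕ} (h : a ∈ substW Θ u) :
    ∃ s x t, u = s ++ x :: t ∧ (∀ z ∈ s, a ∉ Θ z) ∧ a ∈ Θ x := by
  induction u with
  | nil => rw [substW_nil] at h; simp at h
  | cons y u ih =>
    rw [substW_cons] at h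
    by_cases hy : a ∈ Θ y
    · exact ⟨[], y, u, rfl, by simp, hy⟩
    · have : a ∈ substW Θ u := by
        rcases mem_append.1 h with h' | h'
        · exact absurd h' hy
        · exact h'
      obtain ⟨s, x, t, hu, hs, hx⟩ := ih this
      refine ⟨y :: s, x, t, by rw [hu, cons_append], ?_, hx⟩
      intro z hz
      rcases mem_cons.1 hz with rfl | hz'
      exacts [hy, hs z hz']

theorem exists_last_split {Θ : ℕ → Wd} {u : Wd} {b : ℕ} (h : b ∈ substW Θ u) :
    ∃ s x t, u = s ++ x :: t ∧ b ∈ Θ x ∧ ∀ z ∈ t, b ∉ Θ z := by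
  induction u with
  | nil => rw [substW_nil] at h; simp at h
  | cons y u ih =>
    by_cases hrec : b ∈ substW Θ u
    · obtain ⟨s, x, t, hu, hx, ht⟩ := ih hrec
      exact ⟨y :: s, x, t, by rw [hu, cons_append], hx, ht⟩
    · rw [substW_cons] at h
      have hy : b ∈ Θ y := by
        rcases mem_append.1 h with h' | h'
        · exact h'
        · exact absurd h' hrec
      refine ⟨[], y, u, rfl, hy, fun z hz hc => hrec (mem_substW.2 ⟨z, hz, hc⟩)⟩

theorem lastIdx_append_right {l₁ l₂ : Wd} {b : ℕ} (h : b ∈ l₂) :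
    lastIdx (l₁ ++ l₂) b = l₁.length + lastIdx l₂ b := by
  unfold lastIdx
  rw [reverse_append, idxOf_append_of_mem (mem_reverse.2 h), length_append]
  have : l₂.reverse.idxOf b < l₂.length := by
    have := idxOf_lt_length_iff.2 (mem_reverse.2 h); simpa using this
  have h2 : 0 < l₂.length := length_pos_iff.2 (by rintro rfl; simp at h)
  omega

theorem lastIdx_append_left {l₁ l₂ : Wd} {b : ℕ} (h₂ : b ∉ l₂) (h₁ : b ∈ l₁) :
    lastIdx (l₁ ++ l₂) b = lastIdx l₁ b := by
  unfold lastIdx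
  rw [reverse_append, idxOf_append_of_notMem (fun hc => h₂ (mem_reverse.1 hc)),
    length_append, length_reverse]
  have : l₁.reverse.idxOf b < l₁.length := by
    have := idxOf_lt_length_iff.2 (mem_reverse.2 h₁); simpa using this
  omega

theorem Bf_substW {Θ : ℕ → Wd} {s t : Wd} {x a b : ℕ}
    (hs : ∀ z ∈ s, a ∉ Θ z) (hx : a ∈ Θ x) :
    count b ((substW Θ (s ++ x :: t)).take ((substW Θ (s ++ x :: t)).idxOf a)) =
      (s.map (fun z => count b (Θ z))).sum +
        count b ((Θ x).take ((Θ x).idxOf a)) := by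
  have hnA : a ∉ substW Θ s := fun hc => by
    obtain ⟨z, hz, haz⟩ := mem_substW.1 hc; exact hs z hz haz
  rw [substW_append, substW_cons]
  have hidx : (substW Θ s ++ (Θ x ++ substW Θ t)).idxOf a
      = (substW Θ s).length + (Θ x ++ substW Θ t).idxOf a := by
    have := idxOf_append_of_notMem hnA (l₂ := Θ x ++ substW Θ t)
    exact this
  have hidx2 : (Θ x ++ substW Θ t).idxOf a = (Θ x).idxOf a :=
    idxOf_append_of_mem hx
  have hklt : (Θ x).idxOf a < (Θ x).length := idxOf_lt_length_iff.2 hx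
  rw [hidx, hidx2]
  rw [take_append,
    take_of_length_le (by omega : (substW Θ s).length ≤ (substW Θ s).length + (Θ x).idxOf a),
    Nat.add_sub_cancel_left]
  rw [take_append,
    (by omega : (Θ x).idxOf a - (Θ x).length = 0), take_zero, append_nil]
  rw [count_append, count_substW]

theorem Af_substW {Θ : ℕ → Wd} {s t : Wd} {x a b : ℕ}
    (ht : ∀ z ∈ t, b ∉ Θ z) (hx : b ∈ Θ x) :
    count a ((substW Θ (s ++ x :: t)).drop (lastIdx (substW Θ (s ++ x :: t)) b + 1)) =
      count a ((Θ x).drop (lastIdx (Θ x) b + 1)) +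
        (t.map (fun z => count a (Θ z))).sum := by
  have hnC : b ∉ substW Θ t := fun hc => by
    obtain ⟨z, hz, hbz⟩ := mem_substW.1 hc; exact ht z hz hbz
  rw [substW_append, substW_cons]
  have h1 : lastIdx (Θ x ++ substW Θ t) b = lastIdx (Θ x) b :=
    lastIdx_append_left hnC hx
  have h2 : lastIdx (substW Θ s ++ (Θ x ++ substW Θ t)) b
      = (substW Θ s).length + lastIdx (Θ x) b := by
    rw [lastIdx_append_right (mem_append_left _ hx), h1]
  have hql : lastIdx (Θ x) b < (Θ x).length := lastIdx_lt_length hx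
  rw [h2, drop_append, drop_of_length_le (by omega),
    (by omega : (substW Θ s).length + lastIdx (Θ x) b + 1 - (substW Θ s).length
      = lastIdx (Θ x) b + 1), nil_append]
  rw [drop_append,
    (by omega : lastIdx (Θ x) b + 1 - (Θ x).length = 0), drop_zero]
  rw [count_append, count_substW]


theorem normFF {Θ : ℕ → Wd} {u : Wd} {a b : ℕ} :
    PrecFF (substW Θ u) a b ↔
      ∃ x, x ∈ u ∧ PrecFF (Θ x) a b ∧
        ∀ z, z ∈ u → b ∈ Θ z → ¬ (u.idxOf z < u.idxOf x) := by
  rw [flatFF]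
  constructor
  · rintro ⟨s, x, t, hu, hPF, hbs⟩
    have hxu : x ∈ u := by rw [hu]; exact mem_append_right _ (mem_cons_self)
    refine ⟨x, hxu, hPF, fun z hz hbz => ?_⟩
    have hzs : z ∉ s := fun hc => hbs (mem_substW.2 ⟨z, hc, hbz⟩)
    have h1 : s.length ≤ u.idxOf z := by
      rw [hu, idxOf_append_of_notMem hzs]; omega
    have h2 : u.idxOf x ≤ s.length := by
      rw [hu]
      by_cases hxs : x ∈ s
      · rw [idxOf_append_of_mem hxs]; exact le_of_lt (idxOf_lt_length_iff.2 hxs)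
      · rw [idxOf_append_of_notMem hxs, List.idxOf_cons_self]
        omega
    omega
  · rintro ⟨x, hxu, hPF, hall⟩
    have hlt := idxOf_lt_length_iff.2 hxu
    refine ⟨u.take (u.idxOf x), x, u.drop (u.idxOf x + 1), ?_, hPF, ?_⟩
    · conv_lhs => rw [split_take_drop hlt]
      rw [getD_indexOf hxu]
    · intro hc
      obtain ⟨z, hz, hbz⟩ := mem_substW.1 hc
      obtain ⟨hzu, hzi⟩ := mem_take_iff.1 hz
      exact hall z hzu hbz hzi

theorem normLL {Θ : ℕ → Wd} {u : Wd} {a b : ℕ} :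
    PrecLL (substW Θ u) a b ↔
      ∃ x, x ∈ u ∧ PrecLL (Θ x) a b ∧
        ∀ z, z ∈ u → a ∈ Θ z → ¬ (lastIdx u x < lastIdx u z) := by
  rw [flatLL]
  constructor
  · rintro ⟨s, x, t, hu, hPL, hat⟩
    have hxu : x ∈ u := by rw [hu]; exact mem_append_right _ (mem_cons_self)
    refine ⟨x, hxu, hPL, fun z hz haz => ?_⟩
    have hzt : z ∉ t := fun hc => hat (mem_substW.2 ⟨z, hc, haz⟩)
    have h1 : lastIdx u z ≤ s.length := by
      by_contra hcon
      push_neg at hcon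
      have : z ∈ u.drop (s.length + 1) := mem_drop_iff.2 ⟨hz, by omega⟩
      rw [hu, drop_split] at this
      exact hzt this
    have hslt : s.length < u.length := by rw [hu, length_append]; simp
    have h2 : s.length ≤ lastIdx u x := le_lastIdx hslt (by rw [hu]; exact getD_split)
    omega
  · rintro ⟨x, hxu, hPL, hall⟩
    have hlt := lastIdx_lt_length hxu
    refine ⟨u.take (lastIdx u x), x, u.drop (lastIdx u x + 1), ?_, hPL, ?_⟩
    · conv_lhs => rw [split_take_drop hlt]
      rw [getD_lastIdx hxu]
    · intro hc
      obtain ⟨z, hz, haz⟩ := mem_substW.1 hc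
      obtain ⟨hzu, hzi⟩ := mem_drop_iff.1 hz
      exact hall z hzu haz (by omega)

theorem normFL {Θ : ℕ → Wd} {u : Wd} {a b : ℕ} :
    PrecFL (substW Θ u) a b ↔
      ((∃ x, x ∈ u ∧ PrecFL (Θ x) a b) ∨
       (∃ x y, x ∈ u ∧ y ∈ u ∧ a ∈ Θ x ∧ b ∈ Θ y ∧ u.idxOf x < lastIdx u y)) := by
  rw [flatFL]
  constructor
  · rintro ⟨s, x, t, hu, hcase⟩
    have hxu : x ∈ u := by rw [hu]; exact mem_append_right _ (mem_cons_self)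
    rcases hcase with hPF | ⟨hbx, has⟩
    · exact Or.inl ⟨x, hxu, hPF⟩
    · obtain ⟨z, hz, haz⟩ := mem_substW.1 has
      have hzu : z ∈ u := by rw [hu]; exact mem_append_left _ hz
      refine Or.inr ⟨z, x, hzu, hxu, haz, hbx, ?_⟩
      have h1 : u.idxOf z < s.length := by
        rw [hu, idxOf_append_of_mem hz]; exact idxOf_lt_length_iff.2 hz
      have hslt : s.length < u.length := by rw [hu, length_append]; simp
      have h2 : s.length ≤ lastIdx u x := le_lastIdx hslt (by rw [hu]; exact getD_split)
      omega
  · rintro (⟨x, hxu, hPF⟩ | ⟨x, y, hxu, hyu, hax, hby, hfl⟩)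
    · have hlt := idxOf_lt_length_iff.2 hxu
      refine ⟨u.take (u.idxOf x), x, u.drop (u.idxOf x + 1), ?_, Or.inl hPF⟩
      conv_lhs => rw [split_take_drop hlt]
      rw [getD_indexOf hxu]
    · have hlt := lastIdx_lt_length hyu
      refine ⟨u.take (lastIdx u y), y, u.drop (lastIdx u y + 1), ?_, Or.inr ⟨hby, ?_⟩⟩
      · conv_lhs => rw [split_take_drop hlt]
        rw [getD_lastIdx hyu]
      · exact mem_substW.2 ⟨x, mem_take_iff.2 ⟨hxu, hfl⟩, hax⟩

/-! counting lemmas for lin/non transfer -/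

theorem sum_map_zero_iff (g : ℕ → ℕ) (u : Wd) :
    (u.map g).sum = 0 ↔ ∀ x ∈ u, g x = 0 := by
  rw [sum_eq_zero_iff]
  simp

theorem le_sum_of_mem {g : ℕ → ℕ} {u : Wd} {x : ℕ} (h : x ∈ u) : g x ≤ (u.map g).sum := by
  induction u with
  | nil => simp at h
  | cons c u ih =>
    rcases mem_cons.1 h with rfl | h'
    · simp
    · have := ih h'; simp; omega

theorem mul_count_le_sum (g : ℕ → ℕ) (u : Wd) (x : ℕ) :
    count x u * g x ≤ (u.map g).sum := by
  induction u with
  | nil => simp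
  | cons c u ih =>
    rw [count_cons, map_cons, sum_cons]
    by_cases hxc : x = c
    · subst hxc; simp [Nat.add_mul]; omega
    · have hcx : ¬ c = x := fun h => hxc h.symm
      simp [hxc, hcx]
      omega

theorem add_le_sum_of_ne {g : ℕ → ℕ} {u : Wd} {x y : ℕ} (hxy : x ≠ y)
    (hx : x ∈ u) (hy : y ∈ u) : g x + g y ≤ (u.map g).sum := by
  induction u with
  | nil => simp at hx
  | cons c u ih =>
    rw [map_cons, sum_cons]
    rcases mem_cons.1 hx with rfl | hx'
    · have hyu : y ∈ u := by
        rcases mem_cons.1 hy with rfl | h'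
        · exact absurd rfl hxy
        · exact h'
      have := le_sum_of_mem (g := g) hyu
      omega
    · rcases mem_cons.1 hy with rfl | hy'
      · have := le_sum_of_mem (g := g) hx'
        omega
      · have := ih hx' hy'
        omega

theorem two_le_sum_map_iff (g : ℕ → ℕ) (u : Wd) :
    2 ≤ (u.map g).sum ↔
      (∃ x, x ∈ u ∧ 2 ≤ count x u ∧ 1 ≤ g x) ∨ (∃ x, x ∈ u ∧ 2 ≤ g x) ∨
      (∃ x y, x ∈ u ∧ y ∈ u ∧ x ≠ y ∧ 1 ≤ g x ∧ 1 ≤ g y) := by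
  constructor
  · intro h
    induction u with
    | nil => simp at h
    | cons c u ih =>
      rw [map_cons, sum_cons] at h
      rcases Nat.lt_or_ge (g c) 2 with hc2 | hc2
      · rcases Nat.eq_zero_or_pos (g c) with hc0 | hc1
        · rw [hc0, Nat.zero_add] at h
          rcases ih h with ⟨x, hx, hcnt, hgx⟩ | ⟨x, hx, hgx⟩ | ⟨x, y, hx, hy, hxy, hgx, hgy⟩
          · refine Or.inl ⟨x, mem_cons_of_mem _ hx, ?_, hgx⟩
            rw [count_cons]; omega
          · exact Or.inr (Or.inl ⟨x, mem_cons_of_mem _ hx, hgx⟩)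
          · exact Or.inr (Or.inr ⟨x, y, mem_cons_of_mem _ hx, mem_cons_of_mem _ hy, hxy, hgx, hgy⟩)
        · have hgc : g c = 1 := by omega
          have hpos : 1 ≤ (u.map g).sum := by omega
          have : ∃ y ∈ u, 1 ≤ g y := by
            by_contra hcon
            push_neg at hcon
            have : (u.map g).sum = 0 := (sum_map_zero_iff g u).2 (fun x hx => by
              have := hcon x hx; omega)
            omega
          obtain ⟨y, hy, hgy⟩ := this
          by_cases hyc : y = c
          · subst hyc
            have hcy := count_pos_iff.2 hy
            refine Or.inl ⟨y, mem_cons_self, ?_, by omega⟩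
            have he : count y (y :: u) = count y u + 1 := by simp [count_cons]
            omega
          · exact Or.inr (Or.inr ⟨c, y, mem_cons_self, mem_cons_of_mem _ hy, fun h => hyc h.symm, by omega, hgy⟩)
      · exact Or.inr (Or.inl ⟨c, mem_cons_self, hc2⟩)
  · rintro (⟨x, hx, hcnt, hgx⟩ | ⟨x, hx, hgx⟩ | ⟨x, y, hx, hy, hxy, hgx, hgy⟩)
    · have := mul_count_le_sum g u x
      have : 2 * 1 ≤ count x u * g x := Nat.mul_le_mul hcnt hgx
      omega
    · have h1 := le_sum_of_mem (g := g) hx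
      omega
    · have := add_le_sum_of_ne (g := g) hxy hx hy
      omega


variable {Θ : ℕ → Wd} {u v : Wd}

theorem count_class_mono (hc : ∀ z, z ∈ u → z ∈ v)
    (hn : ∀ z, 2 ≤ count z u → 2 ≤ count z v) (g : ℕ → ℕ)
    (h : 2 ≤ (u.map g).sum) : 2 ≤ (v.map g).sum := by
  rw [two_le_sum_map_iff] at h ⊢
  rcases h with ⟨x, hx, hcnt, hgx⟩ | ⟨x, hx, hgx⟩ | ⟨x, y, hx, hy, hxy, hgx, hgy⟩
  · exact Or.inl ⟨x, hc x hx, hn x hcnt, hgx⟩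
  · exact Or.inr (Or.inl ⟨x, hc x hx, hgx⟩)
  · exact Or.inr (Or.inr ⟨x, y, hc x hx, hc y hy, hxy, hgx, hgy⟩)

theorem count_class_transfer (hc : ∀ z, z ∈ u ↔ z ∈ v)
    (hn : ∀ z, 2 ≤ count z u ↔ 2 ≤ count z v) (g : ℕ → ℕ) :
    ((u.map g).sum = 0 ↔ (v.map g).sum = 0) ∧
    (2 ≤ (u.map g).sum ↔ 2 ≤ (v.map g).sum) := by
  constructor
  · rw [sum_map_zero_iff, sum_map_zero_iff]
    exact ⟨fun h x hx => h x ((hc x).2 hx), fun h x hx => h x ((hc x).1 hx)⟩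
  · exact ⟨count_class_mono (fun z => (hc z).1) (fun z => (hn z).1) g,
      count_class_mono (fun z => (hc z).2) (fun z => (hn z).2) g⟩

theorem linnon_sub (hc : ∀ z, z ∈ u ↔ z ∈ v)
    (hn : ∀ z, 2 ≤ count z u ↔ 2 ≤ count z v) :
    linW (substW Θ u) = linW (substW Θ v) ∧
      nonW (substW Θ u) = nonW (substW Θ v) := by
  have key : ∀ a, (count a (substW Θ u) = 0 ↔ count a (substW Θ v) = 0) ∧
      (2 ≤ count a (substW Θ u) ↔ 2 ≤ count a (substW Θ v)) := by
    intro a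
    rw [count_substW, count_substW]
    exact count_class_transfer hc hn _
  constructor
  · ext a
    have h0 := (key a).1
    have h2 := (key a).2
    show (substW Θ u).count a = 1 ↔ (substW Θ v).count a = 1
    omega
  · ext a
    have h2 := (key a).2
    show 2 ≤ (substW Θ u).count a ↔ 2 ≤ (substW Θ v).count a
    omega

theorem mem_sub_transfer (hc : ∀ z, z ∈ u ↔ z ∈ v) (a : ℕ) :
    a ∈ substW Θ u ↔ a ∈ substW Θ v := by
  rw [mem_substW, mem_substW]
  exact ⟨fun ⟨x, hx, hax⟩ => ⟨x, (hc x).1 hx, hax⟩,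
    fun ⟨x, hx, hax⟩ => ⟨x, (hc x).2 hx, hax⟩⟩

theorem lin_mem_facts (hlin : linW u = linW v) (hnon : nonW u = nonW v) :
    (∀ z, z ∈ u ↔ z ∈ v) ∧ (∀ z, 2 ≤ count z u ↔ 2 ≤ count z v) := by
  have h1 : ∀ z, count z u = 1 ↔ count z v = 1 := by
    intro z
    have := Set.ext_iff.1 hlin z
    simpa [linW, List.count] using this
  have h2 : ∀ z, 2 ≤ count z u ↔ 2 ≤ count z v := by
    intro z
    have := Set.ext_iff.1 hnon z
    simpa [nonW, List.count] using this
  refine ⟨fun z => ?_, h2⟩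
  rw [← count_pos_iff, ← count_pos_iff]
  have := h1 z
  have := h2 z
  omega

theorem P11_stable (h : P11 (u, v)) : P11 (substW Θ u, substW Θ v) := by
  obtain ⟨hlin, hnon, hord⟩ := h
  have hlin' : linW u = linW v := hlin
  have hnon' : nonW u = nonW v := hnon
  obtain ⟨hc, hn⟩ := lin_mem_facts hlin' hnon'
  obtain ⟨hL, hN⟩ := linnon_sub (Θ := Θ) hc hn
  refine ⟨hL, hN, ?_⟩
  intro a ha b hb hab
  have haU : a ∈ substW Θ u := ha
  have hbU : b ∈ substW Θ u := hb
  have haV : a ∈ substW Θ v := (mem_sub_transfer hc a).1 haU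
  have hbV : b ∈ substW Θ v := (mem_sub_transfer hc b).1 hbU
  show firstIdx (substW Θ u) a < firstIdx (substW Θ u) b ↔
    firstIdx (substW Θ v) a < firstIdx (substW Θ v) b
  rw [← precFF_iff haU hbU hab, ← precFF_iff haV hbV hab, normFF, normFF]
  have htr : ∀ z x, z ∈ u → x ∈ u →
      (v.idxOf z < v.idxOf x → u.idxOf z < u.idxOf x) := by
    intro z x hz hx hlt
    by_cases hzx : z = x
    · subst hzx; exact absurd hlt (lt_irrefl _)
    · exact (hord z hz x hx hzx).2 hlt
  have htr' : ∀ z x, z ∈ u → x ∈ u →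
      (u.idxOf z < u.idxOf x → v.idxOf z < v.idxOf x) := by
    intro z x hz hx hlt
    by_cases hzx : z = x
    · subst hzx; exact absurd hlt (lt_irrefl _)
    · exact (hord z hz x hx hzx).1 hlt
  constructor
  · rintro ⟨x, hxu, hPF, hall⟩
    refine ⟨x, (hc x).1 hxu, hPF, fun z hzv hbz hlt => ?_⟩
    exact hall z ((hc z).2 hzv) hbz (htr z x ((hc z).2 hzv) hxu hlt)
  · rintro ⟨x, hxv, hPF, hall⟩
    have hxu : x ∈ u := (hc x).2 hxv
    refine ⟨x, hxu, hPF, fun z hzu hbz hlt => ?_⟩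
    exact hall z ((hc z).1 hzu) hbz (htr' z x hzu hxu hlt)

theorem P22_stable (h : P22 (u, v)) : P22 (substW Θ u, substW Θ v) := by
  obtain ⟨hlin, hnon, hord⟩ := h
  have hlin' : linW u = linW v := hlin
  have hnon' : nonW u = nonW v := hnon
  obtain ⟨hc, hn⟩ := lin_mem_facts hlin' hnon'
  obtain ⟨hL, hN⟩ := linnon_sub (Θ := Θ) hc hn
  refine ⟨hL, hN, ?_⟩
  intro a ha b hb hab
  have haU : a ∈ substW Θ u := ha
  have hbU : b ∈ substW Θ u := hb
  have haV : a ∈ substW Θ v := (mem_sub_transfer hc a).1 haU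
  have hbV : b ∈ substW Θ v := (mem_sub_transfer hc b).1 hbU
  show lastIdx (substW Θ u) a < lastIdx (substW Θ u) b ↔
    lastIdx (substW Θ v) a < lastIdx (substW Θ v) b
  rw [← precLL_iff haU hbU hab, ← precLL_iff haV hbV hab, normLL, normLL]
  have htr : ∀ x z, x ∈ u → z ∈ u →
      (lastIdx v x < lastIdx v z → lastIdx u x < lastIdx u z) := by
    intro x z hx hz hlt
    by_cases hzx : x = z
    · subst hzx; exact absurd hlt (lt_irrefl _)
    · exact (hord x hx z hz hzx).2 hlt
  have htr' : ∀ x z, x ∈ u → z ∈ u →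
      (lastIdx u x < lastIdx u z → lastIdx v x < lastIdx v z) := by
    intro x z hx hz hlt
    by_cases hzx : x = z
    · subst hzx; exact absurd hlt (lt_irrefl _)
    · exact (hord x hx z hz hzx).1 hlt
  constructor
  · rintro ⟨x, hxu, hPL, hall⟩
    refine ⟨x, (hc x).1 hxu, hPL, fun z hzv haz hlt => ?_⟩
    exact hall z ((hc z).2 hzv) haz (htr x z hxu ((hc z).2 hzv) hlt)
  · rintro ⟨x, hxv, hPL, hall⟩
    have hxu : x ∈ u := (hc x).2 hxv
    refine ⟨x, hxu, hPL, fun z hzu haz hlt => ?_⟩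
    exact hall z ((hc z).1 hzu) haz (htr' x z hxu hzu hlt)

theorem P12_stable (h : P12 (u, v)) : P12 (substW Θ u, substW Θ v) := by
  obtain ⟨hlin, hnon, hord⟩ := h
  have hlin' : linW u = linW v := hlin
  have hnon' : nonW u = nonW v := hnon
  obtain ⟨hc, hn⟩ := lin_mem_facts hlin' hnon'
  obtain ⟨hL, hN⟩ := linnon_sub (Θ := Θ) hc hn
  refine ⟨hL, hN, ?_⟩
  intro a ha b hb
  have haU : a ∈ substW Θ u := ha
  have hbU : b ∈ substW Θ u := hb
  have haV : a ∈ substW Θ v := (mem_sub_transfer hc a).1 haU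
  have hbV : b ∈ substW Θ v := (mem_sub_transfer hc b).1 hbU
  show firstIdx (substW Θ u) a < lastIdx (substW Θ u) b ↔
    firstIdx (substW Θ v) a < lastIdx (substW Θ v) b
  rw [← precFL_iff haU hbU, ← precFL_iff haV hbV, normFL, normFL]
  constructor
  · rintro (⟨x, hxu, hPF⟩ | ⟨x, y, hxu, hyu, hax, hby, hlt⟩)
    · exact Or.inl ⟨x, (hc x).1 hxu, hPF⟩
    · exact Or.inr ⟨x, y, (hc x).1 hxu, (hc y).1 hyu, hax, hby,
        (hord x hxu y hyu).1 hlt⟩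
  · rintro (⟨x, hxv, hPF⟩ | ⟨x, y, hxv, hyv, hax, hby, hlt⟩)
    · exact Or.inl ⟨x, (hc x).2 hxv, hPF⟩
    · exact Or.inr ⟨x, y, (hc x).2 hxv, (hc y).2 hyv, hax, hby,
        (hord x ((hc x).2 hxv) y ((hc y).2 hyv)).2 hlt⟩


variable {Θ : ℕ → Wd} {u v : Wd}

theorem P1mu_stable (h : P1mu (u, v)) : P1mu (substW Θ u, substW Θ v) := by
  obtain ⟨hbal, hord⟩ := h
  have hbal' : ∀ z, count z u = count z v := hbal
  have hCnt : ∀ a, count a (substW Θ u) = count a (substW Θ v) :=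
    fun a => Perm.count_eq (substW_perm Θ hbal') a
  have hc : ∀ z, z ∈ u ↔ z ∈ v := fun z => by
    rw [← count_pos_iff, ← count_pos_iff, hbal' z]
  refine ⟨fun a => hCnt a, ?_⟩
  intro a ha b hb hab i hi1 hi2
  have haU : a ∈ substW Θ u := ha
  have hbU : b ∈ substW Θ u := hb
  have haV : a ∈ substW Θ v := by
    rw [← count_pos_iff, ← hCnt a, count_pos_iff]; exact haU
  have hbV : b ∈ substW Θ v := by
    rw [← count_pos_iff, ← hCnt b, count_pos_iff]; exact hbU
  have hi2' : i ≤ count b (substW Θ u) := hi2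
  obtain ⟨s, x, t, hu, hs, hx⟩ := exists_first_split haU
  obtain ⟨s', x', t', hv, hs', hx'⟩ := exists_first_split haV
  have hxu : x ∈ u := by rw [hu]; exact mem_append_right _ (mem_cons_self)
  have hx'v : x' ∈ v := by rw [hv]; exact mem_append_right _ (mem_cons_self)
  have hxs : x ∉ s := fun hcs => hs x hcs hx
  have hx's' : x' ∉ s' := fun hcs => hs' x' hcs hx'
  have hidxu : u.idxOf x = s.length := by
    rw [hu, idxOf_append_of_notMem hxs, List.idxOf_cons_self]
    omega
  have hidxv : v.idxOf x' = s'.length := by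
    rw [hv, idxOf_append_of_notMem hx's', List.idxOf_cons_self]
    omega
  -- the leading variable is the same on both sides
  have hxx : x' = x := by
    by_contra hne
    have hx'u : x' ∈ u := (hc x').2 hx'v
    have hxv : x ∈ v := (hc x).1 hxu
    have hx'ns : x' ∉ s := fun hcs => hs x' hcs hx'
    have hxns' : x ∉ s' := fun hcs => hs' x hcs hx
    have h1 : u.idxOf x < u.idxOf x' := by
      have e1 : u.idxOf x' = s.length + (x :: t).idxOf x' := by
        rw [hu, idxOf_append_of_notMem hx'ns]
      have e2 : (x :: t).idxOf x' = (t.idxOf x') + 1 := by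
        rw [List.idxOf_cons_ne _ (fun hcc : x = x' => hne hcc.symm)]
      omega
    have h2 : v.idxOf x' < v.idxOf x := by
      have e1 : v.idxOf x = s'.length + (x' :: t').idxOf x := by
        rw [hv, idxOf_append_of_notMem hxns']
      have e2 : (x' :: t').idxOf x = (t'.idxOf x) + 1 := by
        rw [List.idxOf_cons_ne _ hne]
      omega
    have hcon := hord x hxu x' hx'u (fun he => hne he.symm) 1 le_rfl
      (count_pos_iff.2 hx'u)
    have hn1 : nthOcc u x' 1 = u.idxOf x' := nthOcc_one hx'u
    have hn2 : nthOcc v x' 1 = v.idxOf x' := nthOcc_one hx'v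
    have hcon' : u.idxOf x < u.idxOf x' ↔ v.idxOf x < v.idxOf x' := by
      rw [← hn1, ← hn2]; exact hcon
    omega
  subst hxx
  -- the prefixes have the same counts
  have hscount : ∀ z, count z s = count z s' := by
    intro z
    by_cases hzx : z = x'
    · subst hzx
      rw [count_eq_zero.2 hxs, count_eq_zero.2 hx's']
    by_cases hzu : z ∈ u
    · have hsu : s = u.take (u.idxOf x') := by rw [hidxu, hu, take_left]
      have hsv : s' = v.take (v.idxOf x') := by rw [hidxv, hv, take_left]
      have hslen : count z s ≤ count z u := by
        rw [hsu]; exact (take_sublist _ _).count_le z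
      have hslen' : count z s' ≤ count z v := by
        rw [hsv]; exact (take_sublist _ _).count_le z
      have hkey : ∀ j, 1 ≤ j → j ≤ count z u → (j ≤ count z s ↔ j ≤ count z s') := by
        intro j hj1 hj2
        have h3 : nthOcc u z j < u.idxOf x' ↔ j ≤ count z s := by
          rw [hsu]; exact nthOcc_lt_iff hj1 hj2 _
        have h3' : nthOcc v z j < v.idxOf x' ↔ j ≤ count z s' := by
          rw [hsv]; exact nthOcc_lt_iff hj1 (by rw [← hbal' z]; exact hj2) _
        have hp := nthOcc_spec (w := u) hj1 hj2
        have hp' := nthOcc_spec (w := v) hj1 (by rw [← hbal' z]; exact hj2)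
        have hne2 : nthOcc u z j ≠ u.idxOf x' := fun he => by
          rw [he, getD_indexOf hxu] at hp; exact hzx hp.2.symm
        have hne2' : nthOcc v z j ≠ v.idxOf x' := fun he => by
          rw [he, getD_indexOf hx'v] at hp'; exact hzx hp'.2.symm
        have htr := hord x' hxu z hzu (fun he => hzx he.symm) j hj1 hj2
        have htr' : u.idxOf x' < nthOcc u z j ↔ v.idxOf x' < nthOcc v z j := htr
        omega
      have hq1 : count z s ≤ count z s' := by
        rcases Nat.eq_zero_or_pos (count z s) with h0 | hpos
        · omega
        · exact (hkey (count z s) hpos hslen).1 le_rfl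
      have hq2 : count z s' ≤ count z s := by
        rcases Nat.eq_zero_or_pos (count z s') with h0 | hpos
        · omega
        · exact (hkey (count z s') hpos (by rw [hbal' z]; exact hslen')).2 le_rfl
      omega
    · have hzu0 : count z u = 0 := count_eq_zero.2 hzu
      have hzv0 : count z v = 0 := by rw [← hbal' z]; exact hzu0
      have e1 : count z s ≤ count z u := by
        rw [hu, count_append]; omega
      have e2 : count z s' ≤ count z v := by
        rw [hv, count_append]; omega
      omega
  have hperm : s ~ s' := perm_iff_count.2 hscount
  have hsum : (s.map (fun z => count b (Θ z))).sum
      = (s'.map (fun z => count b (Θ z))).sum := (hperm.map _).sum_eq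
  have hBf := Bf_substW (Θ := Θ) (s := s) (t := t) (x := x') (b := b) hs hx
  have hBf' := Bf_substW (Θ := Θ) (s := s') (t := t') (x := x') (b := b) hs' hx'
  rw [← hu] at hBf
  rw [← hv] at hBf'
  show firstIdx (substW Θ u) a < nthOcc (substW Θ u) b i ↔
    firstIdx (substW Θ v) a < nthOcc (substW Θ v) b i
  rw [firstIdx_lt_nthOcc_iff haU hab hi1 hi2',
    firstIdx_lt_nthOcc_iff haV hab hi1 (by rw [← hCnt b]; exact hi2')]
  show count b ((substW Θ u).take ((substW Θ u).idxOf a)) < i ↔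
    count b ((substW Θ v).take ((substW Θ v).idxOf a)) < i
  rw [hBf, hBf', hsum]

theorem Pmu2_stable (h : Pmu2 (u, v)) : Pmu2 (substW Θ u, substW Θ v) := by
  obtain ⟨hbal, hord⟩ := h
  have hbal' : ∀ z, count z u = count z v := hbal
  have hCnt : ∀ a, count a (substW Θ u) = count a (substW Θ v) :=
    fun a => Perm.count_eq (substW_perm Θ hbal') a
  have hc : ∀ z, z ∈ u ↔ z ∈ v := fun z => by
    rw [← count_pos_iff, ← count_pos_iff, hbal' z]
  refine ⟨fun a => hCnt a, ?_⟩
  intro a ha b hb hab i hi1 hi2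
  have haU : a ∈ substW Θ u := ha
  have hbU : b ∈ substW Θ u := hb
  have haV : a ∈ substW Θ v := by
    rw [← count_pos_iff, ← hCnt a, count_pos_iff]; exact haU
  have hbV : b ∈ substW Θ v := by
    rw [← count_pos_iff, ← hCnt b, count_pos_iff]; exact hbU
  have hi2' : i ≤ count a (substW Θ u) := hi2
  obtain ⟨s, x, t, hu, hx, ht⟩ := exists_last_split hbU
  obtain ⟨s', x', t', hv, hx', ht'⟩ := exists_last_split hbV
  have hxu : x ∈ u := by rw [hu]; exact mem_append_right _ (mem_cons_self)
  have hx'v : x' ∈ v := by rw [hv]; exact mem_append_right _ (mem_cons_self)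
  have hxt : x ∉ t := fun hct => ht x hct hx
  have hx't' : x' ∉ t' := fun hct => ht' x' hct hx'
  have hslt : s.length < u.length := by rw [hu, length_append]; simp
  have hslt' : s'.length < v.length := by rw [hv, length_append]; simp
  have hlastu : lastIdx u x = s.length := by
    have hle : s.length ≤ lastIdx u x := le_lastIdx hslt (by rw [hu]; exact getD_split)
    have hge : lastIdx u x ≤ s.length := by
      by_contra hcon
      push_neg at hcon
      have : x ∈ u.drop (s.length + 1) := mem_drop_iff.2 ⟨hxu, by omega⟩
      rw [hu, drop_split] at this
      exact hxt this
    omega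
  have hlastv : lastIdx v x' = s'.length := by
    have hle : s'.length ≤ lastIdx v x' := le_lastIdx hslt' (by rw [hv]; exact getD_split)
    have hge : lastIdx v x' ≤ s'.length := by
      by_contra hcon
      push_neg at hcon
      have : x' ∈ v.drop (s'.length + 1) := mem_drop_iff.2 ⟨hx'v, by omega⟩
      rw [hv, drop_split] at this
      exact hx't' this
    omega
  -- the last variable is the same on both sides
  have hxx : x' = x := by
    by_contra hne
    have hx'u : x' ∈ u := (hc x').2 hx'v
    have hxv : x ∈ v := (hc x).1 hxu
    have hx'nt : x' ∉ t := fun hct => ht x' hct hx'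
    have hxnt' : x ∉ t' := fun hct => ht' x hct hx
    have h1 : lastIdx u x' < lastIdx u x := by
      have hle : lastIdx u x' ≤ s.length := by
        by_contra hcon
        push_neg at hcon
        have : x' ∈ u.drop (s.length + 1) := mem_drop_iff.2 ⟨hx'u, by omega⟩
        rw [hu, drop_split] at this
        exact hx'nt this
      have hne3 : lastIdx u x' ≠ lastIdx u x := fun he => by
        have e1 := getD_lastIdx hx'u
        rw [he, getD_lastIdx hxu] at e1
        exact hne e1.symm
      omega
    have h2 : lastIdx v x < lastIdx v x' := by
      have hle : lastIdx v x ≤ s'.length := by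
        by_contra hcon
        push_neg at hcon
        have : x ∈ v.drop (s'.length + 1) := mem_drop_iff.2 ⟨hxv, by omega⟩
        rw [hv, drop_split] at this
        exact hxnt' this
      have hne3 : lastIdx v x ≠ lastIdx v x' := fun he => by
        have e1 := getD_lastIdx hxv
        rw [he, getD_lastIdx hx'v] at e1
        exact hne e1
      omega
    have hcon := hord x' hx'u x hxu hne (count x' u) (count_pos_iff.2 hx'u) le_rfl
    have hn1 : nthOcc u x' (count x' u) = lastIdx u x' := nthOcc_count hx'u
    have hn2 : nthOcc v x' (count x' v) = lastIdx v x' := nthOcc_count hx'v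
    have hcon' : lastIdx u x' < lastIdx u x ↔ lastIdx v x' < lastIdx v x := by
      rw [← hn1, ← hn2, ← hbal' x']; exact hcon
    omega
  subst hxx
  -- the suffixes have the same counts
  have htu : t = u.drop (lastIdx u x' + 1) := by rw [hlastu, hu, drop_split]
  have htv : t' = v.drop (lastIdx v x' + 1) := by rw [hlastv, hv, drop_split]
  have htcount : ∀ z, count z t = count z t' := by
    intro z
    by_cases hzx : z = x'
    · subst hzx
      rw [count_eq_zero.2 hxt, count_eq_zero.2 hx't']
    by_cases hzu : z ∈ u
    · have hzv : z ∈ v := (hc z).1 hzu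
      -- count in take (lastIdx) on both sides
      have hkeyu : ∀ j, 1 ≤ j → j ≤ count z u →
          (nthOcc u z j < lastIdx u x' ↔ j ≤ count z (u.take (lastIdx u x'))) :=
        fun j hj1 hj2 => nthOcc_lt_iff hj1 hj2 _
      have hkeyv : ∀ j, 1 ≤ j → j ≤ count z v →
          (nthOcc v z j < lastIdx v x' ↔ j ≤ count z (v.take (lastIdx v x'))) :=
        fun j hj1 hj2 => nthOcc_lt_iff hj1 hj2 _
      set cu := count z (u.take (lastIdx u x')) with hcu
      set cv := count z (v.take (lastIdx v x')) with hcv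
      have hcule : cu ≤ count z u := (take_sublist _ _).count_le z
      have hcvle : cv ≤ count z v := (take_sublist _ _).count_le z
      have hcucv : cu = cv := by
        have hkey : ∀ j, 1 ≤ j → j ≤ count z u → (j ≤ cu ↔ j ≤ cv) := by
          intro j hj1 hj2
          have htr := hord z hzu x' hxu hzx j hj1 hj2
          have htr' : nthOcc u z j < lastIdx u x' ↔ nthOcc v z j < lastIdx v x' := htr
          have h3 := hkeyu j hj1 hj2
          have h3' := hkeyv j hj1 (by rw [← hbal' z]; exact hj2)
          omega
        have hq1 : cu ≤ cv := by
          rcases Nat.eq_zero_or_pos cu with h0 | hpos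
          · omega
          · exact (hkey cu hpos hcule).1 le_rfl
        have hq2 : cv ≤ cu := by
          rcases Nat.eq_zero_or_pos cv with h0 | hpos
          · exact h0 ▸ Nat.zero_le cu
          · exact (hkey cv hpos (by rw [hbal' z]; exact hcvle)).2 le_rfl
        omega
      -- count z t = count z u - count z (take (lastIdx+1)) and take (L+1) count = take L count
      have hLu := lastIdx_lt_length hxu
      have hLv := lastIdx_lt_length hx'v
      have hstep : count z (u.take (lastIdx u x' + 1)) = cu := by
        have e1 := count_take_add_count_drop u z (lastIdx u x')
        have e2 := count_take_add_count_drop u z (lastIdx u x' + 1)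
        have e3 : u.drop (lastIdx u x') = x' :: u.drop (lastIdx u x' + 1) := by
          rw [drop_eq_getElem_cons hLu]
          congr 1
          rw [← getD_eq_getElem _ _ hLu]
          exact getD_lastIdx hxu
        have e4 : count z (u.drop (lastIdx u x'))
            = count z (u.drop (lastIdx u x' + 1)) := by
          rw [e3, count_cons_of_ne (Ne.symm hzx)]
        omega
      have hstep' : count z (v.take (lastIdx v x' + 1)) = cv := by
        have e1 := count_take_add_count_drop v z (lastIdx v x')
        have e2 := count_take_add_count_drop v z (lastIdx v x' + 1)
        have e3 : v.drop (lastIdx v x') = x' :: v.drop (lastIdx v x' + 1) := by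
          rw [drop_eq_getElem_cons hLv]
          congr 1
          rw [← getD_eq_getElem _ _ hLv]
          exact getD_lastIdx hx'v
        have e4 : count z (v.drop (lastIdx v x'))
            = count z (v.drop (lastIdx v x' + 1)) := by
          rw [e3, count_cons_of_ne (Ne.symm hzx)]
        omega
      have efin : count z t = count z u - count z (u.take (lastIdx u x' + 1)) := by
        rw [htu]
        have := count_take_add_count_drop u z (lastIdx u x' + 1)
        omega
      have efin' : count z t' = count z v - count z (v.take (lastIdx v x' + 1)) := by
        rw [htv]
        have := count_take_add_count_drop v z (lastIdx v x' + 1)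
        omega
      rw [efin, efin', hstep, hstep', hcucv, hbal' z]
    · have hzu0 : count z u = 0 := count_eq_zero.2 hzu
      have hzv0 : count z v = 0 := by rw [← hbal' z]; exact hzu0
      have e1 : count z t ≤ count z u := by rw [hu, count_append, count_cons]; omega
      have e2 : count z t' ≤ count z v := by rw [hv, count_append, count_cons]; omega
      omega
  have hperm : t ~ t' := perm_iff_count.2 htcount
  have hsum : (t.map (fun z => count a (Θ z))).sum
      = (t'.map (fun z => count a (Θ z))).sum := (hperm.map _).sum_eq
  have hAf := Af_substW (Θ := Θ) (s := s) (t := t) (x := x') (a := a) ht hx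
  have hAf' := Af_substW (Θ := Θ) (s := s') (t := t') (x := x') (a := a) ht' hx'
  rw [← hu] at hAf
  rw [← hv] at hAf'
  show nthOcc (substW Θ u) a i < lastIdx (substW Θ u) b ↔
    nthOcc (substW Θ v) a i < lastIdx (substW Θ v) b
  rw [nthOcc_lt_lastIdx_iff hbU hab hi1 hi2',
    nthOcc_lt_lastIdx_iff hbV hab hi1 (by rw [← hCnt a]; exact hi2')]
  rw [hAf, hAf', hsum, hCnt a]


end StabAux

theorem stmt17 (Θ : ℕ → Wd) (hΘ : ∀ a, Θ a ≠ []) (u v : Wd) :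
    (P11 (u, v) → P11 (substW Θ u, substW Θ v)) ∧
    (P22 (u, v) → P22 (substW Θ u, substW Θ v)) ∧
    (P12 (u, v) → P12 (substW Θ u, substW Θ v)) ∧
    (P1mu (u, v) → P1mu (substW Θ u, substW Θ v)) ∧
    (Pmu2 (u, v) → Pmu2 (substW Θ u, substW Θ v)) := by
  exact ⟨fun h => StabAux.P11_stable h, fun h => StabAux.P22_stable h,
    fun h => StabAux.P12_stable h, fun h => StabAux.P1mu_stable h,
    fun h => StabAux.Pmu2_stable h⟩
end

section
/- Let A, B, C be words and x a variable such that x occurs in A, x occurs in C, and every variable occurring in B also occurs in C. Then the identity A B x C ≈ A x B x C is a consequence of {x t1 x t2 x ≈ x t1 x x t2 x, x t1 y x x t2 y ≈ x t1 x y x x t2 y}^δ, where x, y, t1, t2 are distinct variables. -/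
lemma restr_univ (u : Wd) : restrict u Set.univ = u := by
  unfold restrict
  exact List.filter_eq_self.mpr fun a _ => by simp

/-- Base step of the induction: duplicating an `a` (element version of
`a t a s a = a t a a s a`). -/
lemma chain0 {M : Type*} [Monoid M] (a α1 α2 γ1 γ2 eC : M)
    (hCx : eC = γ1 * (a * γ2))
    (h1 : ∀ t s : M, a * t * a * s * a = a * t * a * a * s * a) :
    α1 * a * α2 * a * eC = α1 * a * α2 * a * a * eC := by
  subst hCx
  calc α1 * a * α2 * a * (γ1 * (a * γ2))
      = α1 * (a * α2 * a * γ1 * a) * γ2 := by simp only [mul_assoc]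
    _ = α1 * (a * α2 * a * a * γ1 * a) * γ2 := by rw [h1]
    _ = α1 * a * α2 * a * a * (γ1 * (a * γ2)) := by simp only [mul_assoc]

/-- Inductive step chain. -/
lemma chain1 {M : Type*} [Monoid M] (a β α1 α2 Be γ1 γ2 δ1 δ2 eC : M)
    (hCx : eC = γ1 * (a * γ2)) (hCb : eC = δ1 * (β * δ2))
    (h1 : ∀ t s : M, a * t * a * s * a = a * t * a * a * s * a)
    (h2 : ∀ t b s : M, a * t * b * a * a * s * b = a * t * a * b * a * a * s * b)
    (IH0 : α1 * a * α2 * Be * a * (β * (a * eC)) =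
           α1 * a * α2 * a * Be * a * (β * (a * eC))) :
    α1 * a * α2 * (Be * β) * a * eC = α1 * a * α2 * a * (Be * β) * a * eC := by
  subst hCx
  calc α1 * a * α2 * (Be * β) * a * (γ1 * (a * γ2))
      = α1 * (a * (α2 * Be * β) * a * γ1 * a) * γ2 := by simp only [mul_assoc]
    _ = α1 * (a * (α2 * Be * β) * a * a * γ1 * a) * γ2 := by rw [h1]
    _ = α1 * (a * (α2 * Be) * β * a * a * δ1 * β) * δ2 := by
        simp only [mul_assoc]; rw [hCb]
    _ = α1 * (a * (α2 * Be) * a * β * a * a * δ1 * β) * δ2 := by rw [h2]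
    _ = α1 * a * α2 * Be * (a * β * a * a * γ1 * a) * γ2 := by
        simp only [mul_assoc]; rw [← hCb]
    _ = α1 * a * α2 * Be * (a * β * a * γ1 * a) * γ2 := by rw [← h1]
    _ = α1 * a * α2 * Be * a * (β * (a * (γ1 * (a * γ2)))) := by simp only [mul_assoc]
    _ = α1 * a * α2 * a * Be * a * (β * (a * (γ1 * (a * γ2)))) := IH0
    _ = α1 * a * α2 * a * Be * (a * β * a * γ1 * a) * γ2 := by simp only [mul_assoc]
    _ = α1 * a * α2 * a * Be * (a * β * a * a * γ1 * a) * γ2 := by rw [h1]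
    _ = α1 * a * α2 * (a * Be * a * β * a * a * δ1 * β) * δ2 := by
        simp only [mul_assoc]; rw [hCb]
    _ = α1 * a * α2 * (a * Be * β * a * a * δ1 * β) * δ2 := by rw [← h2]
    _ = α1 * a * α2 * (a * (Be * β) * a * a * γ1 * a) * γ2 := by
        simp only [mul_assoc]; rw [← hCb]
    _ = α1 * a * α2 * (a * (Be * β) * a * γ1 * a) * γ2 := by rw [← h1]
    _ = α1 * a * α2 * a * (Be * β) * a * (γ1 * (a * γ2)) := by simp only [mul_assoc]

theorem stmt18 (A B C : Wd) (x : ℕ)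
    (hA : x ∈ A) (hC : x ∈ C) (hB : ∀ y ∈ B, y ∈ C) :
    Consequence
      (delta {([0,2,0,3,0], [0,2,0,0,3,0]), ([0,2,1,0,0,3,1], [0,2,0,1,0,0,3,1])})
      (A ++ B ++ [x] ++ C, A ++ [x] ++ B ++ [x] ++ C) := by
  intro M _ hΓ φ
  have mem1 : (([0,2,0,3,0] : Wd), ([0,2,0,0,3,0] : Wd)) ∈
      delta {(([0,2,0,3,0] : Wd), ([0,2,0,0,3,0] : Wd)),
             (([0,2,1,0,0,3,1] : Wd), ([0,2,0,1,0,0,3,1] : Wd))} :=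
    ⟨_, Set.mem_insert _ _, Set.univ, by rw [restr_univ, restr_univ]⟩
  have mem2 : (([0,2,1,0,0,3,1] : Wd), ([0,2,0,1,0,0,3,1] : Wd)) ∈
      delta {(([0,2,0,3,0] : Wd), ([0,2,0,0,3,0] : Wd)),
             (([0,2,1,0,0,3,1] : Wd), ([0,2,0,1,0,0,3,1] : Wd))} :=
    ⟨_, Set.mem_insert_iff.mpr (Or.inr rfl), Set.univ, by rw [restr_univ, restr_univ]⟩
  have h1 : ∀ t s : M, φ x * t * φ x * s * φ x = φ x * t * φ x * φ x * s * φ x := by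
    intro t s
    have := hΓ _ mem1 (fun n => if n = 0 then φ x else if n = 2 then t else s)
    simpa [evalWord, mul_assoc] using this
  have h2 : ∀ t b s : M,
      φ x * t * b * φ x * φ x * s * b = φ x * t * φ x * b * φ x * φ x * s * b := by
    intro t b s
    have := hΓ _ mem2
      (fun n => if n = 0 then φ x else if n = 1 then b else if n = 2 then t else s)
    simpa [evalWord, mul_assoc] using this
  obtain ⟨A1, A2, rfl⟩ := List.append_of_mem hA
  have main : ∀ B C : Wd, x ∈ C → (∀ y ∈ B, y ∈ C) →
      evalWord φ A1 * φ x * evalWord φ A2 * evalWord φ B * φ x * evalWord φ C =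
      evalWord φ A1 * φ x * evalWord φ A2 * φ x * evalWord φ B * φ x * evalWord φ C := by
    intro B
    induction B using List.reverseRecOn with
    | nil =>
      intro C hC _
      obtain ⟨C1, C2, hC12⟩ := List.append_of_mem hC
      have hCx : evalWord φ C = evalWord φ C1 * (φ x * evalWord φ C2) := by
        rw [hC12]; simp [evalWord, mul_assoc]
      rw [show evalWord φ ([] : Wd) = 1 from rfl, mul_one, mul_one]
      exact chain0 (φ x) _ _ _ _ _ hCx h1
    | append_singleton B' b IH =>
      intro C hC hB
      have hbC : b ∈ C := hB b (by simp)
      obtain ⟨C1, C2, hC12⟩ := List.append_of_mem hC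
      obtain ⟨D, E, hDE⟩ := List.append_of_mem hbC
      have hCx : evalWord φ C = evalWord φ C1 * (φ x * evalWord φ C2) := by
        rw [hC12]; simp [evalWord, mul_assoc]
      have hCb : evalWord φ C = evalWord φ D * (φ b * evalWord φ E) := by
        rw [hDE]; simp [evalWord, mul_assoc]
      have IH0 := IH (b :: x :: C) (by simp)
        (fun y hy => List.mem_cons_of_mem _ (List.mem_cons_of_mem _
          (hB y (List.mem_append_left _ hy))))
      have hcons : evalWord φ (b :: x :: C) = φ b * (φ x * evalWord φ C) := by
        simp [evalWord, mul_assoc]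
      rw [hcons] at IH0
      have hBb : evalWord φ (B' ++ [b]) = evalWord φ B' * φ b := by
        simp [evalWord]
      rw [hBb]
      exact chain1 (φ x) (φ b) _ _ _ _ _ _ _ _ hCx hCb h1 h2 IH0
  have key := main B C hC hB
  simp only [evalWord, List.map_append, List.prod_append, List.map_cons,
    List.prod_cons, List.map_nil, List.prod_nil, mul_one, one_mul, mul_assoc] at key ⊢
  exact key
end
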